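/- arXiv:1506.04999 — 2 statements merged into one kernel-verified Lean document; each statement's English description precedes it below -/
import Mathlib

section
/- (Gentle operator lemma, deterministic version) Let ρ be a positive semidefinite operator with Tr[ρ] ≤ 1 and E an operator with 0 ≤ E ≤ 1. If Tr[Eρ] ≥ 1 − ε for some 0 < ε ≤ 1, then (1/2)‖ρ − √E ρ √E‖₁ ≤ √ε. -/
open Matrix ComplexOrder BigOperators Finset

/-- The positive square root of a positive semidefinite matrix (removed from Mathlib;
restored with its former definition). -/
noncomputable def Matrix.PosSemidef.sqrt {n : Type*} [Fintype n] [DecidableEq n] {𝕜 : Type*}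
    [RCLike 𝕜] {A : Matrix n n 𝕜} (hA : A.PosSemidef) : Matrix n n 𝕜 :=
  hA.1.eigenvectorUnitary.1 * diagonal ((↑) ∘ (√·) ∘ hA.1.eigenvalues) *
    (star hA.1.eigenvectorUnitary : Matrix n n 𝕜)

noncomputable def traceNorm {d : Type*} [Fintype d] [DecidableEq d] (A : Matrix d d ℂ) : ℝ :=
  ((Matrix.posSemidef_conjTranspose_mul_self A).sqrt.trace).re

noncomputable def traceDist {d : Type*} [Fintype d] [DecidableEq d] (A B : Matrix d d ℂ) : ℝ :=
  traceNorm (A - B) / 2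

namespace Matrix.PosSemidef

variable {d : Type*} [Fintype d] [DecidableEq d] {A : Matrix d d ℂ}

lemma posSemidef_sqrt (hA : A.PosSemidef) : hA.sqrt.PosSemidef := by
  have hd : (diagonal (RCLike.ofReal ∘ Real.sqrt ∘ hA.1.eigenvalues : d → ℂ)).PosSemidef := by
    refine Matrix.PosSemidef.diagonal fun i => ?_
    exact RCLike.ofReal_nonneg.mpr (Real.sqrt_nonneg _)
  have := hd.mul_mul_conjTranspose_same (hA.1.eigenvectorUnitary : Matrix d d ℂ)
  rwa [← Matrix.star_eq_conjTranspose] at this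

lemma sqrt_mul_self (hA : A.PosSemidef) : hA.sqrt * hA.sqrt = A := by
  have hU : star (hA.1.eigenvectorUnitary : Matrix d d ℂ) *
      (hA.1.eigenvectorUnitary : Matrix d d ℂ) = 1 :=
    mem_unitaryGroup_iff'.mp hA.1.eigenvectorUnitary.2
  rw [Matrix.PosSemidef.sqrt]
  simp only [mul_assoc]
  rw [← mul_assoc (star (hA.1.eigenvectorUnitary : Matrix d d ℂ))
    (hA.1.eigenvectorUnitary : Matrix d d ℂ), hU, one_mul, ← mul_assoc (diagonal _),
    diagonal_mul_diagonal]
  conv_rhs => rw [hA.1.spectral_theorem, Unitary.conjStarAlgAut_apply]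
  rw [← mul_assoc]
  congr 2
  refine congrArg diagonal (funext fun i => ?_)
  simp only [Function.comp_apply]
  rw [← RCLike.ofReal_mul, Real.mul_self_sqrt (hA.eigenvalues_nonneg i)]

open scoped MatrixOrder in
lemma eq_sqrt_of_sq_eq {B : Matrix d d ℂ} (hB : B.PosSemidef) (hA : A.PosSemidef)
    (h : B ^ 2 = A) : B = hA.sqrt := by
  have h1 : CFC.sqrt A = B := CFC.sqrt_unique (by rw [← pow_two]; exact h) hB.nonneg
  have h2 : CFC.sqrt A = hA.sqrt := CFC.sqrt_unique (sqrt_mul_self hA) (posSemidef_sqrt hA).nonneg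
  rw [← h1, h2]

end Matrix.PosSemidef

section GentleAuxSection

variable {d : Type*} [Fintype d] [DecidableEq d]

lemma psd_trace_re_nonneg {M : Matrix d d ℂ} (hM : M.PosSemidef) : 0 ≤ M.trace.re := by
  have h : ∀ i, 0 ≤ (M i i).re := by
    intro i
    have := hM.re_dotProduct_nonneg (Pi.single i 1)
    simpa [dotProduct, Matrix.mulVec, Pi.single_apply] using this
  rw [Matrix.trace, Complex.re_sum]
  exact Finset.sum_nonneg fun i _ => h i

lemma trace_mul_psd_nonneg {A B : Matrix d d ℂ} (hA : A.PosSemidef) (hB : B.PosSemidef) :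
    0 ≤ ((A * B).trace).re := by
  have h1 : (A * B).trace = (hA.sqrt * B * hA.sqrt).trace := by
    conv_lhs => rw [← hA.sqrt_mul_self]
    rw [mul_assoc, Matrix.trace_mul_comm, mul_assoc]
  rw [h1]
  have h2 : (hA.sqrt * B * hA.sqrt).PosSemidef := by
    have := hB.conjTranspose_mul_mul_same hA.sqrt
    rwa [hA.posSemidef_sqrt.1.eq] at this
  exact psd_trace_re_nonneg h2

lemma trace_conjTranspose_mul (X Y : Matrix d d ℂ) :
    (Xᴴ * Y).trace = ∑ p : d × d, (starRingEnd ℂ) (X p.1 p.2) * Y p.1 p.2 := by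
  rw [Matrix.trace, ← Finset.univ_product_univ, Finset.sum_product]
  simp only [Matrix.mul_apply, Matrix.conjTranspose_apply, Matrix.diag, RCLike.star_def]
  rw [Finset.sum_comm]

lemma trace_cs (X Y : Matrix d d ℂ) :
    ((Xᴴ * Y).trace).re ≤ Real.sqrt ((Xᴴ * X).trace).re * Real.sqrt ((Yᴴ * Y).trace).re := by
  let x : EuclideanSpace ℂ (d × d) := WithLp.toLp 2 (fun p : d × d => X p.1 p.2)
  let y : EuclideanSpace ℂ (d × d) := WithLp.toLp 2 (fun p : d × d => Y p.1 p.2)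
  have hxy : (Xᴴ * Y).trace = inner (𝕜 := ℂ) x y := by
    rw [trace_conjTranspose_mul]
    simp [PiLp.inner_apply, RCLike.inner_apply, x, y]
    exact Finset.sum_congr rfl fun p _ => mul_comm _ _
  have hxx : Real.sqrt ((Xᴴ * X).trace).re = ‖x‖ := by
    rw [EuclideanSpace.norm_eq, trace_conjTranspose_mul]
    congr 1
    rw [Complex.re_sum]
    refine Finset.sum_congr rfl fun p _ => ?_
    have : ((starRingEnd ℂ) (X p.1 p.2) * X p.1 p.2) = (‖X p.1 p.2‖ : ℂ)^2 := by
      rw [Complex.conj_mul']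
    rw [this]
    norm_cast
  have hyy : Real.sqrt ((Yᴴ * Y).trace).re = ‖y‖ := by
    rw [EuclideanSpace.norm_eq, trace_conjTranspose_mul]
    congr 1
    rw [Complex.re_sum]
    refine Finset.sum_congr rfl fun p _ => ?_
    have : ((starRingEnd ℂ) (Y p.1 p.2) * Y p.1 p.2) = (‖Y p.1 p.2‖ : ℂ)^2 := by
      rw [Complex.conj_mul']
    rw [this]
    norm_cast
  rw [hxy, hxx, hyy]
  calc (inner (𝕜 := ℂ) x y).re ≤ ‖(inner (𝕜 := ℂ) x y)‖ := Complex.re_le_norm _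
  _ ≤ ‖x‖ * ‖y‖ := norm_inner_le_norm x y

lemma conj_mul_conj (U A B : Matrix d d ℂ) (hU : star U * U = 1) :
    (U * A * star U) * (U * B * star U) = U * (A * B) * star U := by
  simp only [mul_assoc]
  rw [← mul_assoc (star U) U, hU, one_mul]

namespace GentleAux

variable {Δ : Matrix d d ℂ}

noncomputable def signM (hΔ : Δ.IsHermitian) : Matrix d d ℂ :=
  (hΔ.eigenvectorUnitary : Matrix d d ℂ) *
    diagonal (fun i => (if hΔ.eigenvalues i < 0 then -1 else 1 : ℂ)) *
    star (hΔ.eigenvectorUnitary : Matrix d d ℂ)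

noncomputable def absM (hΔ : Δ.IsHermitian) : Matrix d d ℂ :=
  (hΔ.eigenvectorUnitary : Matrix d d ℂ) *
    diagonal (fun i => ((|hΔ.eigenvalues i| : ℝ) : ℂ)) *
    star (hΔ.eigenvectorUnitary : Matrix d d ℂ)

variable (hΔ : Δ.IsHermitian)

lemma hU1 : star (hΔ.eigenvectorUnitary : Matrix d d ℂ) * (hΔ.eigenvectorUnitary : Matrix d d ℂ) = 1 :=
  mem_unitaryGroup_iff'.mp hΔ.eigenvectorUnitary.2

lemma hU2 : (hΔ.eigenvectorUnitary : Matrix d d ℂ) * star (hΔ.eigenvectorUnitary : Matrix d d ℂ) = 1 :=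
  mem_unitaryGroup_iff.mp hΔ.eigenvectorUnitary.2

lemma absM_posSemidef : (absM hΔ).PosSemidef := by
  have hd : (diagonal (fun i => ((|hΔ.eigenvalues i| : ℝ) : ℂ))).PosSemidef := by
    refine Matrix.PosSemidef.diagonal fun i => ?_
    exact Complex.zero_le_real.mpr (abs_nonneg _)
  have := hd.mul_mul_conjTranspose_same (hΔ.eigenvectorUnitary : Matrix d d ℂ)
  rwa [← Matrix.star_eq_conjTranspose] at this

lemma absM_sq : (absM hΔ) ^ 2 = Δᴴ * Δ := by
  rw [hΔ.eq, pow_two, absM, conj_mul_conj _ _ _ (hU1 hΔ)]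
  conv_rhs => rw [hΔ.spectral_theorem, Unitary.conjStarAlgAut_apply]
  rw [conj_mul_conj _ _ _ (hU1 hΔ)]
  congr 2
  rw [diagonal_mul_diagonal, diagonal_mul_diagonal]
  refine congrArg diagonal (funext fun i => ?_)
  simp only [Function.comp_apply]
  norm_cast
  rw [abs_mul_abs_self]
  rfl

lemma signM_mul : signM hΔ * Δ = absM hΔ := by
  have h1 : signM hΔ * Δ = signM hΔ *
      ((hΔ.eigenvectorUnitary : Matrix d d ℂ) * diagonal (RCLike.ofReal ∘ hΔ.eigenvalues) *
        star (hΔ.eigenvectorUnitary : Matrix d d ℂ)) := by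
    exact congrArg _ hΔ.spectral_theorem
  rw [h1, signM, conj_mul_conj _ _ _ (hU1 hΔ), absM]
  congr 2
  rw [diagonal_mul_diagonal]
  refine congrArg diagonal (funext fun i => ?_)
  simp only [Function.comp_apply]
  by_cases h : hΔ.eigenvalues i < 0
  · rw [if_pos h, abs_of_neg h]
    push_cast
    ring_nf
    rfl
  · rw [if_neg h, abs_of_nonneg (not_lt.mp h), one_mul]
    norm_cast

lemma signM_star_mul : star (signM hΔ) * signM hΔ = 1 := by
  have hs : star (signM hΔ) = (hΔ.eigenvectorUnitary : Matrix d d ℂ) *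
      diagonal (fun i => (if hΔ.eigenvalues i < 0 then -1 else 1 : ℂ)) *
      star (hΔ.eigenvectorUnitary : Matrix d d ℂ) := by
    rw [signM, StarMul.star_mul, StarMul.star_mul, star_star, mul_assoc]
    congr 1
    rw [Matrix.star_eq_conjTranspose, diagonal_conjTranspose]
    have hfun : (star fun i => (if hΔ.eigenvalues i < 0 then -1 else 1 : ℂ))
        = (fun i => (if hΔ.eigenvalues i < 0 then -1 else 1 : ℂ)) := by
      funext i
      simp [Pi.star_apply, apply_ite (star : ℂ → ℂ)]
    rw [hfun]
  rw [hs, signM, conj_mul_conj _ _ _ (hU1 hΔ), diagonal_mul_diagonal]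
  have : (fun i => (if hΔ.eigenvalues i < 0 then -1 else 1 : ℂ) *
      (if hΔ.eigenvalues i < 0 then -1 else 1 : ℂ)) = fun _ => (1 : ℂ) := by
    funext i
    by_cases h : hΔ.eigenvalues i < 0 <;> simp [h]
  rw [this, diagonal_one, mul_one, hU2]

lemma traceNorm_eq :
    ((Matrix.posSemidef_conjTranspose_mul_self Δ).sqrt.trace).re = ((signM hΔ * Δ).trace).re := by
  have h := (absM_posSemidef hΔ).eq_sqrt_of_sq_eq (Matrix.posSemidef_conjTranspose_mul_self Δ) (absM_sq hΔ)
  rw [← h, signM_mul]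

end GentleAux

lemma eig_le_one {E : Matrix d d ℂ} (hE : E.PosSemidef)
    (hE1 : ((1 : Matrix d d ℂ) - E).PosSemidef) (i : d) : hE.1.eigenvalues i ≤ 1 := by
  have hv := hE.1.mulVec_eigenvectorBasis i
  set v : d → ℂ := ⇑(hE.1.eigenvectorBasis i) with hvdef
  have hvv : dotProduct (star v) v = 1 := by
    have horth := hE.1.eigenvectorBasis.orthonormal
    rw [orthonormal_iff_ite] at horth
    have h := horth i i
    simp only [if_true, eq_self_iff_true] at h
    rw [← h]
    rw [PiLp.inner_apply]
    simp [dotProduct, RCLike.inner_apply, mul_comm]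
    refine Finset.sum_congr rfl fun x _ => ?_
    rw [Complex.mul_conj, Complex.normSq_eq_norm_sq, Complex.ofReal_pow, hvdef]
  have h0 := hE1.dotProduct_mulVec_nonneg v
  rw [Matrix.sub_mulVec, Matrix.one_mulVec, hv] at h0
  have hsmul : star v ⬝ᵥ (v - hE.1.eigenvalues i • v)
      = 1 - (hE.1.eigenvalues i : ℂ) := by
    rw [dotProduct_sub, hvv]
    congr 1
    rw [show (hE.1.eigenvalues i • v) = (hE.1.eigenvalues i : ℂ) • v from by
      funext j; simp [Pi.smul_apply, Complex.real_smul]]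
    rw [dotProduct_smul, hvv, smul_eq_mul, mul_one]
  rw [hsmul] at h0
  have : (0:ℂ) ≤ ((1 - hE.1.eigenvalues i : ℝ) : ℂ) := by push_cast; exact h0
  have := Complex.zero_le_real.mp this
  linarith

lemma sqrt_sub_psd {E : Matrix d d ℂ} (hE : E.PosSemidef)
    (hE1 : ((1 : Matrix d d ℂ) - E).PosSemidef) : (hE.sqrt - E).PosSemidef := by
  have hsq : hE.sqrt = (hE.1.eigenvectorUnitary : Matrix d d ℂ) *
      diagonal ((↑) ∘ Real.sqrt ∘ hE.1.eigenvalues) *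
      star (hE.1.eigenvectorUnitary : Matrix d d ℂ) := rfl
  have hspec := hE.1.spectral_theorem
  rw [Unitary.conjStarAlgAut_apply] at hspec
  have key : hE.sqrt - E = (hE.1.eigenvectorUnitary : Matrix d d ℂ) *
      diagonal (fun i => ((Real.sqrt (hE.1.eigenvalues i) - hE.1.eigenvalues i : ℝ) : ℂ)) *
      star (hE.1.eigenvectorUnitary : Matrix d d ℂ) := by
    rw [congrArg₂ (· - ·) hsq hspec]
    rw [← Matrix.sub_mul, ← Matrix.mul_sub, diagonal_sub]
    congr 2
    refine congrArg diagonal (funext fun i => ?_)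
    push_cast
    rfl
  rw [key]
  have hd : (diagonal (fun i => ((Real.sqrt (hE.1.eigenvalues i) - hE.1.eigenvalues i : ℝ) : ℂ))).PosSemidef := by
    refine Matrix.PosSemidef.diagonal fun i => ?_
    simp only [Pi.zero_apply]
    rw [Complex.zero_le_real, sub_nonneg]
    have h0 := hE.eigenvalues_nonneg i
    have h1 := eig_le_one hE hE1 i
    nlinarith [Real.sq_sqrt h0, Real.sqrt_nonneg (hE.1.eigenvalues i),
      Real.sqrt_le_sqrt h1, Real.sqrt_one]
  have := hd.mul_mul_conjTranspose_same (hE.1.eigenvectorUnitary : Matrix d d ℂ)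
  rwa [← Matrix.star_eq_conjTranspose] at this

end GentleAuxSection

/-- Gentle operator lemma, deterministic version. -/
theorem gentle_operator {d : Type*} [Fintype d] [DecidableEq d]
    (ρ E : Matrix d d ℂ)
    (hρ : ρ.PosSemidef) (hρtr : (ρ.trace).re ≤ 1)
    (hE : E.PosSemidef) (hE1 : ((1 : Matrix d d ℂ) - E).PosSemidef)
    (ε : ℝ) (hε : 0 < ε) (hε1 : ε ≤ 1)
    (h : ((E * ρ).trace).re ≥ 1 - ε) :
    traceNorm (ρ - hE.sqrt * ρ * hE.sqrt) / 2 ≤ Real.sqrt ε := by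
  set P := hE.sqrt with hPdef
  have hPherm : P.IsHermitian := hE.posSemidef_sqrt.1
  have hPP : P * P = E := hE.sqrt_mul_self
  set s := hρ.sqrt with hsdef
  have hsherm : s.IsHermitian := hρ.posSemidef_sqrt.1
  have hss : s * s = ρ := hρ.sqrt_mul_self
  set Q : Matrix d d ℂ := 1 - P with hQdef
  have hQherm : Q.IsHermitian := Matrix.isHermitian_one.sub hPherm
  have hΔherm : (ρ - P * ρ * P).IsHermitian := by
    refine hρ.1.sub ?_
    have : (P * ρ * P)ᴴ = P * ρ * P := by
      simp [Matrix.conjTranspose_mul, hρ.1.eq, hPherm.eq, mul_assoc]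
    exact this
  set W := GentleAux.signM hΔherm with hWdef
  have hW : star W * W = 1 := GentleAux.signM_star_mul hΔherm
  have hdecomp : ρ - P * ρ * P = Q * ρ + P * ρ * Q := by
    rw [hQdef]; noncomm_ring
  -- term 1
  have hXH : (s * Q * star W)ᴴ = W * (Q * s) := by
    rw [Matrix.star_eq_conjTranspose, Matrix.conjTranspose_mul,
      Matrix.conjTranspose_conjTranspose, Matrix.conjTranspose_mul, hQherm.eq, hsherm.eq]
  have hX : W * (Q * ρ) = (s * Q * star W)ᴴ * s := by
    rw [hXH, ← hss]; noncomm_ring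
  have hXX : (((s * Q * star W)ᴴ * (s * Q * star W)).trace) = ((Q * Q * ρ).trace) := by
    rw [hXH]
    have h2 : (W * (Q * s)) * (s * Q * star W) = W * ((Q * (s * s) * Q) * star W) := by
      noncomm_ring
    rw [h2, Matrix.trace_mul_comm, mul_assoc, hW, mul_one, hss, Matrix.trace_mul_cycle]
  have hYY : ((sᴴ * s).trace) = ρ.trace := by rw [hsherm.eq, hss]
  have hterm1 : ((W * (Q * ρ)).trace).re ≤
      Real.sqrt ((Q * Q * ρ).trace).re * Real.sqrt (ρ.trace).re := by
    have hcs := trace_cs (s * Q * star W) s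
    rw [← hX, hXX, hYY] at hcs
    exact hcs
  -- term 2
  have hXH2 : (s * P * star W)ᴴ = W * (P * s) := by
    rw [Matrix.star_eq_conjTranspose, Matrix.conjTranspose_mul,
      Matrix.conjTranspose_conjTranspose, Matrix.conjTranspose_mul, hPherm.eq, hsherm.eq]
  have hX2 : W * (P * ρ * Q) = (s * P * star W)ᴴ * (s * Q) := by
    rw [hXH2, ← hss]; noncomm_ring
  have hXX2 : (((s * P * star W)ᴴ * (s * P * star W)).trace) = ((E * ρ).trace) := by
    rw [hXH2]
    have h2 : (W * (P * s)) * (s * P * star W) = W * ((P * (s * s) * P) * star W) := by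
      noncomm_ring
    rw [h2, Matrix.trace_mul_comm, mul_assoc, hW, mul_one, hss, Matrix.trace_mul_cycle, hPP]
  have hYY2 : (((s * Q)ᴴ * (s * Q)).trace) = ((Q * Q * ρ).trace) := by
    rw [Matrix.conjTranspose_mul, hsherm.eq, hQherm.eq]
    have h2 : (Q * s) * (s * Q) = Q * (s * s) * Q := by noncomm_ring
    rw [h2, hss, Matrix.trace_mul_cycle]
  have hterm2 : ((W * (P * ρ * Q)).trace).re ≤
      Real.sqrt ((E * ρ).trace).re * Real.sqrt ((Q * Q * ρ).trace).re := by
    have hcs := trace_cs (s * P * star W) (s * Q)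
    rw [← hX2, hXX2, hYY2] at hcs
    exact hcs
  -- trace bounds
  have hr0 : 0 ≤ (ρ.trace).re := psd_trace_re_nonneg hρ
  have he_le_r : ((E * ρ).trace).re ≤ (ρ.trace).re := by
    have h0 := trace_mul_psd_nonneg hE1 hρ
    have hexp : ((1 : Matrix d d ℂ) - E) * ρ = ρ - E * ρ := by noncomm_ring
    rw [hexp, Matrix.trace_sub, Complex.sub_re] at h0
    linarith
  have ht_le : ((Q * Q * ρ).trace).re ≤ ε := by
    have hkey : ((1 : Matrix d d ℂ) - E) - Q * Q = (P - E) + (P - E) := by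
      rw [hQdef, ← hPP]; noncomm_ring
    have hpsd2 : (((1 : Matrix d d ℂ) - E) - Q * Q).PosSemidef := by
      rw [hkey]
      exact (sqrt_sub_psd hE hE1).add (sqrt_sub_psd hE hE1)
    have h0 := trace_mul_psd_nonneg hpsd2 hρ
    have hexp : (((1 : Matrix d d ℂ) - E) - Q * Q) * ρ = ρ - E * ρ - Q * Q * ρ := by
      noncomm_ring
    rw [hexp, Matrix.trace_sub, Matrix.trace_sub, Complex.sub_re, Complex.sub_re] at h0
    linarith
  -- assemble
  have hsum : traceNorm (ρ - P * ρ * P)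
      = ((W * (Q * ρ)).trace).re + ((W * (P * ρ * Q)).trace).re := by
    rw [traceNorm, GentleAux.traceNorm_eq hΔherm, ← hWdef]
    have hmul : W * (ρ - P * ρ * P) = W * (Q * ρ) + W * (P * ρ * Q) := by
      rw [hdecomp, mul_add]
    rw [hmul, Matrix.trace_add, Complex.add_re]
  have hsqrt_r : Real.sqrt (ρ.trace).re ≤ 1 := by
    rw [show (1:ℝ) = Real.sqrt 1 from (Real.sqrt_one).symm]
    exact Real.sqrt_le_sqrt hρtr
  have hsqrt_e : Real.sqrt ((E * ρ).trace).re ≤ 1 := by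
    rw [show (1:ℝ) = Real.sqrt 1 from (Real.sqrt_one).symm]
    exact Real.sqrt_le_sqrt (le_trans he_le_r hρtr)
  have hsqrt_t : Real.sqrt ((Q * Q * ρ).trace).re ≤ Real.sqrt ε :=
    Real.sqrt_le_sqrt ht_le
  have hεnn : 0 ≤ Real.sqrt ε := Real.sqrt_nonneg ε
  have h1 : Real.sqrt ((Q * Q * ρ).trace).re * Real.sqrt (ρ.trace).re ≤ Real.sqrt ε := by
    calc Real.sqrt ((Q * Q * ρ).trace).re * Real.sqrt (ρ.trace).re
        ≤ Real.sqrt ε * 1 :=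
          mul_le_mul hsqrt_t hsqrt_r (Real.sqrt_nonneg _) hεnn
      _ = Real.sqrt ε := mul_one _
  have h2 : Real.sqrt ((E * ρ).trace).re * Real.sqrt ((Q * Q * ρ).trace).re ≤ Real.sqrt ε := by
    calc Real.sqrt ((E * ρ).trace).re * Real.sqrt ((Q * Q * ρ).trace).re
        ≤ 1 * Real.sqrt ε :=
          mul_le_mul hsqrt_e hsqrt_t (Real.sqrt_nonneg _) (by norm_num)
      _ = Real.sqrt ε := one_mul _
  have : traceNorm (ρ - P * ρ * P) ≤ 2 * Real.sqrt ε := by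
    rw [hsum]
    linarith
  linarith
end

section
/- (Exponential law of large numbers) Let X₁,…,X_n be i.i.d. random variables on a finite probability space with mean x̄ and nonzero variance. Then for every δ > 0 there exist constants c > 0 (depending on δ and the distribution but not on n) such that P(|(1/n)Σ X_i − x̄| ≥ δ) ≤ 2e^{−cn}. -/
open BigOperators Finset Filter Topology

-- derivative negative at 0 gives a point to the right with smaller value
lemma deriv_neg_exists {f : ℝ → ℝ} {d : ℝ} (hf : HasDerivAt f d 0) (hd : d < 0) :
    ∃ s > (0:ℝ), f s < f 0 := by
  rw [hasDerivAt_iff_tendsto_slope] at hf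
  have h1 : ∀ᶠ s in 𝓝[≠] (0:ℝ), slope f 0 s < 0 := (tendsto_order.1 hf).2 0 hd
  have h2 : ∀ᶠ s in 𝓝[>] (0:ℝ), slope f 0 s < 0 :=
    h1.filter_mono (nhdsWithin_mono _ (fun x hx => ne_of_gt hx))
  have h3 : ∀ᶠ s in 𝓝[>] (0:ℝ), s ∈ Set.Ioi (0:ℝ) := self_mem_nhdsWithin
  obtain ⟨s, hs1, hs2⟩ := (h2.and h3).exists
  refine ⟨s, hs2, ?_⟩
  rw [slope_def_field, div_neg_iff] at hs1
  rcases hs1 with ⟨h, h'⟩ | ⟨h, h'⟩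
  · linarith [hs2.out]
  · linarith

lemma deriv_pos_exists {f : ℝ → ℝ} {d : ℝ} (hf : HasDerivAt f d 0) (hd : 0 < d) :
    ∃ s < (0:ℝ), f s < f 0 := by
  have hg : HasDerivAt (fun s => f (-s)) (-d) 0 := by
    have h0 : HasDerivAt f d (-(0:ℝ)) := by simpa using hf
    have := h0.comp (0:ℝ) (hasDerivAt_neg (0:ℝ))
    simpa [Function.comp_def] using this
  obtain ⟨s, hs, hfs⟩ := deriv_neg_exists hg (by linarith)
  exact ⟨-s, by linarith, by simpa using hfs⟩

lemma chernoff_core {Ω : Type*} [Fintype Ω] (p : Ω → ℝ) (hp0 : ∀ ω, 0 ≤ p ω)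
    (Y : Ω → ℝ) (n : ℕ) :
    ∑ f ∈ Finset.univ.filter (fun f : Fin n → Ω => 0 ≤ ∑ i, Y (f i)), ∏ i, p (f i)
      ≤ (∑ ω, p ω * Real.exp (Y ω)) ^ n := by
  classical
  rw [Fintype.sum_pow]
  calc ∑ f ∈ Finset.univ.filter (fun f : Fin n → Ω => 0 ≤ ∑ i, Y (f i)), ∏ i, p (f i)
      ≤ ∑ f ∈ Finset.univ.filter (fun f : Fin n → Ω => 0 ≤ ∑ i, Y (f i)),
          ∏ i, (p (f i) * Real.exp (Y (f i))) := by
        apply Finset.sum_le_sum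
        intro f hf
        rw [Finset.mem_filter] at hf
        rw [Finset.prod_mul_distrib, ← Real.exp_sum]
        nth_rewrite 1 [← mul_one (∏ i, p (f i))]
        exact mul_le_mul_of_nonneg_left (Real.one_le_exp hf.2)
          (Finset.prod_nonneg fun i _ => hp0 _)
    _ ≤ ∑ f : Fin n → Ω, ∏ i, (p (f i) * Real.exp (Y (f i))) :=
        Finset.sum_le_sum_of_subset_of_nonneg (Finset.filter_subset _ _)
          (fun f _ _ => Finset.prod_nonneg fun i _ =>
            mul_nonneg (hp0 _) (Real.exp_nonneg _))

lemma mgf_deriv {Ω : Type*} [Fintype Ω] (p : Ω → ℝ) (Z : Ω → ℝ) :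
    HasDerivAt (fun s => ∑ ω, p ω * Real.exp (s * Z ω)) (∑ ω, p ω * Z ω) 0 := by
  apply HasDerivAt.fun_sum
  intro ω _
  have h := ((hasDerivAt_id (0:ℝ)).mul_const (Z ω)).exp
  simpa using h.const_mul (p ω)

lemma mgf_lt_one {Ω : Type*} [Fintype Ω] (p : Ω → ℝ) (hp0 : ∀ ω, 0 ≤ p ω)
    (hp1 : ∑ ω, p ω = 1) (Z : Ω → ℝ) (hmean : ∑ ω, p ω * Z ω < 0) :
    ∃ s > (0:ℝ), 0 < ∑ ω, p ω * Real.exp (s * Z ω) ∧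
      ∑ ω, p ω * Real.exp (s * Z ω) < 1 := by
  obtain ⟨s, hs, hfs⟩ := deriv_neg_exists (mgf_deriv p Z) hmean
  have hpos : ∃ ω : Ω, 0 < p ω := by
    by_contra h
    push_neg at h
    have : ∑ ω, p ω = 0 := Finset.sum_eq_zero fun ω _ => le_antisymm (h ω) (hp0 ω)
    simp [this] at hp1
  obtain ⟨ω₀, hω₀⟩ := hpos
  refine ⟨s, hs, ?_, ?_⟩
  · exact Finset.sum_pos' (fun ω _ => mul_nonneg (hp0 ω) (Real.exp_nonneg _))
      ⟨ω₀, Finset.mem_univ _, mul_pos hω₀ (Real.exp_pos _)⟩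
  · simpa [hp1] using hfs

lemma mgf_lt_one' {Ω : Type*} [Fintype Ω] (p : Ω → ℝ) (hp0 : ∀ ω, 0 ≤ p ω)
    (hp1 : ∑ ω, p ω = 1) (Z : Ω → ℝ) (hmean : 0 < ∑ ω, p ω * Z ω) :
    ∃ s < (0:ℝ), 0 < ∑ ω, p ω * Real.exp (s * Z ω) ∧
      ∑ ω, p ω * Real.exp (s * Z ω) < 1 := by
  obtain ⟨s, hs, hfs⟩ := deriv_pos_exists (mgf_deriv p Z) hmean
  have hpos : ∃ ω : Ω, 0 < p ω := by
    by_contra h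
    push_neg at h
    have : ∑ ω, p ω = 0 := Finset.sum_eq_zero fun ω _ => le_antisymm (h ω) (hp0 ω)
    simp [this] at hp1
  obtain ⟨ω₀, hω₀⟩ := hpos
  refine ⟨s, hs, ?_, ?_⟩
  · exact Finset.sum_pos' (fun ω _ => mul_nonneg (hp0 ω) (Real.exp_nonneg _))
      ⟨ω₀, Finset.mem_univ _, mul_pos hω₀ (Real.exp_pos _)⟩
  · simpa [hp1] using hfs

/-- Exponential law of large numbers: for i.i.d. variables with nonzero variance,
the probability of deviating from the mean by at least δ decays exponentially in n. -/
theorem exponential_lln {Ω : Type*} [Fintype Ω]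
    (p : Ω → ℝ) (hp0 : ∀ ω, 0 ≤ p ω) (hp1 : ∑ ω, p ω = 1) (X : Ω → ℝ)
    (hvar : ∑ ω, p ω * (X ω - ∑ ω', p ω' * X ω') ^ 2 ≠ 0) :
    ∀ δ > (0 : ℝ), ∃ c > (0 : ℝ), ∀ n : ℕ, 1 ≤ n →
      ∑ f ∈ Finset.univ.filter
          (fun f : Fin n → Ω =>
            δ ≤ |(1 / (n : ℝ)) * ∑ i, X (f i) - ∑ ω', p ω' * X ω'|),
        ∏ i, p (f i) ≤ 2 * Real.exp (-c * n) := by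
  classical
  intro δ hδ
  set μ : ℝ := ∑ ω', p ω' * X ω' with hμ
  have hm1 : ∑ ω, p ω * (X ω - (μ + δ)) < 0 := by
    have : ∑ ω, p ω * (X ω - (μ + δ)) = (∑ ω, p ω * X ω) - (∑ ω, p ω) * (μ + δ) := by
      rw [Finset.sum_mul, ← Finset.sum_sub_distrib]
      exact Finset.sum_congr rfl fun ω _ => by ring
    rw [this, hp1, ← hμ]
    linarith
  have hm2 : 0 < ∑ ω, p ω * (X ω - (μ - δ)) := by
    have : ∑ ω, p ω * (X ω - (μ - δ)) = (∑ ω, p ω * X ω) - (∑ ω, p ω) * (μ - δ) := by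
      rw [Finset.sum_mul, ← Finset.sum_sub_distrib]
      exact Finset.sum_congr rfl fun ω _ => by ring
    rw [this, hp1, ← hμ]
    linarith
  obtain ⟨s, hs, hr1pos, hr1lt⟩ := mgf_lt_one p hp0 hp1 (fun ω => X ω - (μ + δ)) hm1
  obtain ⟨t, ht, hr2pos, hr2lt⟩ := mgf_lt_one' p hp0 hp1 (fun ω => X ω - (μ - δ)) hm2
  set r₁ : ℝ := ∑ ω, p ω * Real.exp (s * (X ω - (μ + δ))) with hr₁
  set r₂ : ℝ := ∑ ω, p ω * Real.exp (t * (X ω - (μ - δ))) with hr₂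
  have hl1 : Real.log r₁ < 0 := Real.log_neg hr1pos hr1lt
  have hl2 : Real.log r₂ < 0 := Real.log_neg hr2pos hr2lt
  refine ⟨min (-Real.log r₁) (-Real.log r₂), lt_min (by linarith) (by linarith), ?_⟩
  set c : ℝ := min (-Real.log r₁) (-Real.log r₂) with hc
  intro n hn
  have hnpos : (0:ℝ) < n := by exact_mod_cast Nat.lt_of_lt_of_le Nat.zero_lt_one hn
  set A : Finset (Fin n → Ω) :=
    Finset.univ.filter (fun f => δ ≤ (1 / (n : ℝ)) * ∑ i, X (f i) - μ) with hA
  set B : Finset (Fin n → Ω) :=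
    Finset.univ.filter (fun f => δ ≤ -((1 / (n : ℝ)) * ∑ i, X (f i) - μ)) with hB
  have hnn : ∀ f : Fin n → Ω, 0 ≤ ∏ i, p (f i) :=
    fun f => Finset.prod_nonneg fun i _ => hp0 _
  have hsub : Finset.univ.filter
      (fun f : Fin n → Ω => δ ≤ |(1 / (n : ℝ)) * ∑ i, X (f i) - μ|) ⊆ A ∪ B := by
    intro f hf
    rw [Finset.mem_filter] at hf
    rcases le_abs.1 hf.2 with h | h
    · exact Finset.mem_union_left _ (Finset.mem_filter.2 ⟨Finset.mem_univ _, h⟩)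
    · exact Finset.mem_union_right _ (Finset.mem_filter.2 ⟨Finset.mem_univ _, h⟩)
  have hstep1 : ∑ f ∈ Finset.univ.filter
      (fun f : Fin n → Ω => δ ≤ |(1 / (n : ℝ)) * ∑ i, X (f i) - μ|), ∏ i, p (f i)
      ≤ (∑ f ∈ A, ∏ i, p (f i)) + ∑ f ∈ B, ∏ i, p (f i) := by
    have h1 : ∑ f ∈ Finset.univ.filter
        (fun f : Fin n → Ω => δ ≤ |(1 / (n : ℝ)) * ∑ i, X (f i) - μ|), ∏ i, p (f i)
        ≤ ∑ f ∈ A ∪ B, ∏ i, p (f i) :=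
      Finset.sum_le_sum_of_subset_of_nonneg hsub fun f _ _ => hnn f
    have h2 := Finset.sum_union_inter (s₁ := A) (s₂ := B) (f := fun f => ∏ i, p (f i))
    have h3 : 0 ≤ ∑ f ∈ A ∩ B, ∏ i, p (f i) := Finset.sum_nonneg fun f _ => hnn f
    linarith
  have hAbound : ∑ f ∈ A, ∏ i, p (f i) ≤ r₁ ^ n := by
    refine le_trans (Finset.sum_le_sum_of_subset_of_nonneg ?_ fun f _ _ => hnn f)
      (chernoff_core p hp0 (fun ω => s * (X ω - (μ + δ))) n)
    intro f hf
    rw [hA, Finset.mem_filter] at hf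
    rw [Finset.mem_filter]
    refine ⟨Finset.mem_univ _, ?_⟩
    have hS : (n:ℝ) * (μ + δ) ≤ ∑ i, X (f i) := by
      have h' : μ + δ ≤ (1 / (n : ℝ)) * ∑ i, X (f i) := by linarith [hf.2]
      have := mul_le_mul_of_nonneg_left h' hnpos.le
      rwa [show (n:ℝ) * ((1 / (n : ℝ)) * ∑ i, X (f i)) = ∑ i, X (f i) by
        field_simp] at this
    have heq : ∑ i, s * (X (f i) - (μ + δ)) = s * ((∑ i, X (f i)) - n * (μ + δ)) := by
      rw [← Finset.mul_sum, Finset.sum_sub_distrib, Finset.sum_const, Finset.card_univ,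
        Fintype.card_fin, nsmul_eq_mul]
    rw [heq]
    exact mul_nonneg hs.le (by linarith)
  have hBbound : ∑ f ∈ B, ∏ i, p (f i) ≤ r₂ ^ n := by
    refine le_trans (Finset.sum_le_sum_of_subset_of_nonneg ?_ fun f _ _ => hnn f)
      (chernoff_core p hp0 (fun ω => t * (X ω - (μ - δ))) n)
    intro f hf
    rw [hB, Finset.mem_filter] at hf
    rw [Finset.mem_filter]
    refine ⟨Finset.mem_univ _, ?_⟩
    have hS : ∑ i, X (f i) ≤ (n:ℝ) * (μ - δ) := by
      have h' : (1 / (n : ℝ)) * ∑ i, X (f i) ≤ μ - δ := by linarith [hf.2]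
      have := mul_le_mul_of_nonneg_left h' hnpos.le
      rwa [show (n:ℝ) * ((1 / (n : ℝ)) * ∑ i, X (f i)) = ∑ i, X (f i) by
        field_simp] at this
    have heq : ∑ i, t * (X (f i) - (μ - δ)) = t * ((∑ i, X (f i)) - n * (μ - δ)) := by
      rw [← Finset.mul_sum, Finset.sum_sub_distrib, Finset.sum_const, Finset.card_univ,
        Fintype.card_fin, nsmul_eq_mul]
    rw [heq]
    exact mul_nonneg_of_nonpos_of_nonpos ht.le (by linarith)
  have hexp1 : r₁ ^ n ≤ Real.exp (-c * n) := by
    rw [← Real.exp_log hr1pos, ← Real.exp_nat_mul, Real.exp_le_exp]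
    have : c ≤ -Real.log r₁ := min_le_left _ _
    have h' : Real.log r₁ ≤ -c := by linarith
    calc (n:ℝ) * Real.log r₁ ≤ (n:ℝ) * (-c) := mul_le_mul_of_nonneg_left h' hnpos.le
      _ = -c * n := by ring
  have hexp2 : r₂ ^ n ≤ Real.exp (-c * n) := by
    rw [← Real.exp_log hr2pos, ← Real.exp_nat_mul, Real.exp_le_exp]
    have : c ≤ -Real.log r₂ := min_le_right _ _
    have h' : Real.log r₂ ≤ -c := by linarith
    calc (n:ℝ) * Real.log r₂ ≤ (n:ℝ) * (-c) := mul_le_mul_of_nonneg_left h' hnpos.le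
      _ = -c * n := by ring
  linarith [hstep1, hAbound, hBbound, hexp1, hexp2]
end
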